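/- Let G be a simple graph with m ≥ 1 edges, T_G triangles, and trussness t_G, and let x ≥ 0 be an integer. With G(x) the disjoint union of G and ℓ = ⌈m / C(x+2,2)⌉ disjoint copies of K_{x+2}, and T', m' the triangle and edge counts of G(x), one has T'/m' ≤ max{t_G, x/3}. -/

import Mathlib

/-- The support of the edge `{u,v}` in graph `H`. -/
noncomputable def supp {V : Type*} (H : SimpleGraph V) (u v : V) : ℕ :=
  {w | H.Adj u w ∧ H.Adj v w}.ncard

/-- The number of triangles of `G`. -/
noncomputable def triCount {V : Type*} (G : SimpleGraph V) : ℕ :=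
  {t : Finset V | G.IsNClique 3 t}.ncard

/-- The trussness of `G`. -/
noncomputable def trussness {V : Type*} (G : SimpleGraph V) : ℕ :=
  sSup {k | ∃ H : SimpleGraph V, H ≤ G ∧ H ≠ ⊥ ∧ ∀ u v, H.Adj u v → k ≤ supp H u v}

/-- `G(x)`: the disjoint union of `G` with `ℓ` disjoint copies of the complete graph
`K_{x+2}` (the "spurious cliques"). -/
def addCliques {V : Type*} (G : SimpleGraph V) (x ℓ : ℕ) :
    SimpleGraph (V ⊕ (Fin ℓ × Fin (x + 2))) where
  Adj a b := (∃ u v, a = Sum.inl u ∧ b = Sum.inl v ∧ G.Adj u v) ∨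
    (∃ i u v, a = Sum.inr (i, u) ∧ b = Sum.inr (i, v) ∧ u ≠ v)
  symm := ⟨fun a b h => by
    rcases h with ⟨u, v, h1, h2, h3⟩ | ⟨i, u, v, h1, h2, h3⟩
    · exact Or.inl ⟨v, u, h2, h1, h3.symm⟩
    · exact Or.inr ⟨i, v, u, h2, h1, h3.symm⟩⟩
  loopless := ⟨fun a h => by
    rcases h with ⟨u, v, h1, h2, h3⟩ | ⟨i, u, v, h1, h2, h3⟩ <;> simp_all⟩

lemma addCliques_adj_iff {V : Type*} {G : SimpleGraph V} {x ℓ : ℕ}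
    {a b : V ⊕ (Fin ℓ × Fin (x + 2))} :
    (addCliques G x ℓ).Adj a b ↔ ((∃ u v, a = Sum.inl u ∧ b = Sum.inl v ∧ G.Adj u v) ∨
      (∃ i u v, a = Sum.inr (i, u) ∧ b = Sum.inr (i, v) ∧ u ≠ v)) := Iff.rfl

lemma triCount_bot {V : Type*} : triCount (⊥ : SimpleGraph V) = 0 := by
  unfold triCount
  convert Set.ncard_empty (Finset V)
  ext t
  simp only [Set.mem_setOf_eq, Set.mem_empty_iff_false, iff_false]
  rintro ⟨hc, hcard⟩
  obtain ⟨a, ha, b, hb, hab⟩ := Finset.one_lt_card.mp (by omega : 1 < t.card)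
  exact hc ha hb hab

lemma triCount_deleteEdge {V : Type*} [Fintype V] (H : SimpleGraph V) {u v : V}
    (h : H.Adj u v) :
    triCount H ≤ triCount (H.deleteEdges {s(u,v)}) + supp H u v := by
  classical
  set H' := H.deleteEdges {s(u,v)} with hH'
  have hsub : {t : Finset V | H.IsNClique 3 t} ⊆
      {t : Finset V | H'.IsNClique 3 t} ∪
        ((fun w => ({u, v, w} : Finset V)) '' {w | H.Adj u w ∧ H.Adj v w}) := by
    intro t ht
    obtain ⟨hc, hcard⟩ := ht
    by_cases huv : u ∈ t ∧ v ∈ t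
    · right
      obtain ⟨hu, hv⟩ := huv
      have hne : u ≠ v := h.ne
      have h2 : ({u, v} : Finset V) ⊆ t := by
        intro z hz; simp at hz; rcases hz with rfl | rfl <;> assumption
      have hcard2 : ({u, v} : Finset V).card = 2 := by simp [hne]
      have : (t \ {u, v}).card = 1 := by
        rw [Finset.card_sdiff_of_subset h2]; omega
      obtain ⟨w, hw⟩ := Finset.card_eq_one.mp this
      have hwmem : w ∈ t := by
        have : w ∈ t \ ({u, v} : Finset V) := hw ▸ Finset.mem_singleton_self w
        exact (Finset.mem_sdiff.mp this).1
      have hwne : w ∉ ({u, v} : Finset V) := by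
        have : w ∈ t \ ({u, v} : Finset V) := hw ▸ Finset.mem_singleton_self w
        exact (Finset.mem_sdiff.mp this).2
      simp only [Finset.mem_insert, Finset.mem_singleton, not_or] at hwne
      refine ⟨w, ⟨hc hu hwmem (Ne.symm hwne.1), hc hv hwmem (Ne.symm hwne.2)⟩, ?_⟩
      -- {u,v,w} = t
      apply Finset.eq_of_subset_of_card_le
      · intro z hz; simp at hz; rcases hz with rfl | rfl | rfl <;> assumption
      · rw [hcard]
        simp only []
        have h1 : ({u, v, w} : Finset V).card ≤ 3 := by
          apply le_trans (Finset.card_insert_le _ _)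
          have : ({v, w} : Finset V).card ≤ 2 :=
            le_trans (Finset.card_insert_le _ _) (by simp)
          omega
        have h2 : ({u, v, w} : Finset V).card = 3 := by
          rw [Finset.card_insert_of_notMem, Finset.card_insert_of_notMem] <;>
            simp_all [hne, Ne.symm hwne.1, Ne.symm hwne.2]
        omega
    · left
      refine ⟨fun a ha b hb hab => ?_, hcard⟩
      have hadj := hc ha hb hab
      rw [hH', SimpleGraph.deleteEdges_adj]
      refine ⟨hadj, ?_⟩
      simp only [Set.mem_singleton_iff, Sym2.eq_iff]
      rintro (⟨rfl, rfl⟩ | ⟨rfl, rfl⟩)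
      · exact huv ⟨ha, hb⟩
      · exact huv ⟨hb, ha⟩
  calc triCount H ≤ ({t : Finset V | H'.IsNClique 3 t} ∪
        ((fun w => ({u, v, w} : Finset V)) '' {w | H.Adj u w ∧ H.Adj v w})).ncard :=
        Set.ncard_le_ncard hsub (Set.toFinite _)
    _ ≤ {t : Finset V | H'.IsNClique 3 t}.ncard +
        ((fun w => ({u, v, w} : Finset V)) '' {w | H.Adj u w ∧ H.Adj v w}).ncard :=
        Set.ncard_union_le _ _
    _ ≤ triCount H' + supp H u v := by
        unfold triCount supp
        gcongr
        exact Set.ncard_image_le (Set.toFinite _)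

lemma key_induction {V : Type*} [Fintype V] (k : ℕ) :
    ∀ (n : ℕ) (H : SimpleGraph V), H.edgeSet.ncard = n →
      (∀ H' : SimpleGraph V, H' ≤ H → H' ≠ ⊥ → ∃ u v, H'.Adj u v ∧ supp H' u v ≤ k) →
      triCount H ≤ n * k := by
  intro n
  induction n using Nat.strong_induction_on with
  | _ n ih =>
    intro H hn hHyp
    by_cases hb : H = ⊥
    · subst hb; simp [triCount_bot]
    · obtain ⟨u, v, huv, hsupp⟩ := hHyp H le_rfl hb
      set H' := H.deleteEdges {s(u,v)} with hH'
      have hmem : s(u,v) ∈ H.edgeSet := huv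
      have hn1 : 1 ≤ n := by
        rw [← hn]
        exact (Set.ncard_pos (Set.toFinite _)).mpr ⟨_, hmem⟩
      have hE : H'.edgeSet.ncard = n - 1 := by
        rw [hH', SimpleGraph.edgeSet_deleteEdges]
        rw [Set.ncard_diff_singleton_of_mem hmem, hn]
      have hrec := ih (n-1) (by omega) H' hE (fun H'' h1 h2 =>
        hHyp H'' (h1.trans (SimpleGraph.deleteEdges_le _)) h2)
      have h2 := triCount_deleteEdge H huv
      rw [← hH'] at h2
      have : triCount H ≤ (n-1) * k + k := by omega
      calc triCount H ≤ (n-1) * k + k := this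
        _ ≤ n * k := by
            have : (n-1) * k + k = (n-1+1) * k := by ring
            rw [this]; gcongr; omega

lemma triCount_le_trussness {V : Type*} [Fintype V] (G : SimpleGraph V) :
    triCount G ≤ G.edgeSet.ncard * trussness G := by
  apply key_induction (trussness G) _ G rfl
  intro H' hle hne
  by_contra hcon
  push_neg at hcon
  have hmem : trussness G + 1 ∈
      {k | ∃ H : SimpleGraph V, H ≤ G ∧ H ≠ ⊥ ∧ ∀ u v, H.Adj u v → k ≤ supp H u v} :=
    ⟨H', hle, hne, fun u v h => hcon u v h⟩
  have hbdd : BddAbove {k | ∃ H : SimpleGraph V, H ≤ G ∧ H ≠ ⊥ ∧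
      ∀ u v, H.Adj u v → k ≤ supp H u v} := by
    refine ⟨Fintype.card V, fun k hk => ?_⟩
    obtain ⟨H, _, hHne, hs⟩ := hk
    obtain ⟨e, he⟩ := (SimpleGraph.edgeSet_nonempty).mpr hHne
    induction e using Sym2.ind with
    | _ a b =>
      refine le_trans (hs a b he) ?_
      unfold supp
      calc ({w | H.Adj a w ∧ H.Adj b w}).ncard ≤ (Set.univ : Set V).ncard :=
            Set.ncard_le_ncard (Set.subset_univ _) Set.finite_univ
        _ = Fintype.card V := by rw [Set.ncard_univ, Nat.card_eq_fintype_card]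
  have := le_csSup hbdd hmem
  unfold trussness at this
  omega

lemma addCliques_edge_ncard {V : Type*} [Fintype V] (G : SimpleGraph V) (x ℓ : ℕ) :
    (addCliques G x ℓ).edgeSet.ncard = G.edgeSet.ncard + ℓ * (x+2).choose 2 := by
  classical
  set f : Sym2 V → Sym2 (V ⊕ (Fin ℓ × Fin (x+2))) := Sym2.map Sum.inl with hf
  set g : Fin ℓ × Sym2 (Fin (x+2)) → Sym2 (V ⊕ (Fin ℓ × Fin (x+2))) :=
    fun p => Sym2.map (fun u => Sum.inr (p.1, u)) p.2 with hg
  have hdecomp : (addCliques G x ℓ).edgeSet =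
      f '' G.edgeSet ∪ g '' (Set.univ ×ˢ (⊤ : SimpleGraph (Fin (x+2))).edgeSet) := by
    ext e
    induction e using Sym2.ind with
    | _ a b =>
      simp only [SimpleGraph.mem_edgeSet, Set.mem_union, Set.mem_image, addCliques_adj_iff]
      constructor
      · rintro (⟨u, v, rfl, rfl, huv⟩ | ⟨i, u, v, rfl, rfl, huv⟩)
        · exact Or.inl ⟨s(u,v), huv, rfl⟩
        · exact Or.inr ⟨(i, s(u,v)), by simp [huv], rfl⟩
      · rintro (⟨e', he', heq⟩ | ⟨⟨i, e'⟩, he', heq⟩)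
        · induction e' using Sym2.ind with
          | _ u v =>
            rw [hf] at heq
            simp only [Sym2.map_pair_eq, Sym2.eq_iff] at heq
            rcases heq with ⟨rfl, rfl⟩ | ⟨rfl, rfl⟩
            · exact Or.inl ⟨u, v, rfl, rfl, he'⟩
            · exact Or.inl ⟨v, u, rfl, rfl, (G.mem_edgeSet.mp he').symm⟩
        · induction e' using Sym2.ind with
          | _ u v =>
            simp only [Set.mem_prod, Set.mem_univ, SimpleGraph.mem_edgeSet, true_and,
              SimpleGraph.top_adj] at he'
            rw [hg] at heq
            simp only [Sym2.map_pair_eq, Sym2.eq_iff] at heq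
            rcases heq with ⟨rfl, rfl⟩ | ⟨rfl, rfl⟩
            · exact Or.inr ⟨i, u, v, rfl, rfl, he'⟩
            · exact Or.inr ⟨i, v, u, rfl, rfl, he'.symm⟩
  have hginj : Function.Injective g := by
    rintro ⟨i, e⟩ ⟨j, e'⟩ h
    induction e using Sym2.ind with
    | _ a b =>
      induction e' using Sym2.ind with
      | _ c d =>
        rw [hg] at h
        simp only [Sym2.map_pair_eq, Sym2.eq_iff, Sum.inr.injEq, Prod.mk.injEq] at h
        obtain ⟨⟨rfl, rfl⟩, -, rfl⟩ | ⟨⟨rfl, rfl⟩, -, rfl⟩ := h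
        · rfl
        · simp [Sym2.eq_swap]
  have hdisj : Disjoint (f '' G.edgeSet)
      (g '' (Set.univ ×ˢ (⊤ : SimpleGraph (Fin (x+2))).edgeSet)) := by
    rw [Set.disjoint_left]
    rintro e ⟨e1, -, rfl⟩ ⟨⟨i, e2⟩, -, heq⟩
    induction e1 using Sym2.ind with
    | _ a b =>
      induction e2 using Sym2.ind with
      | _ c d =>
        rw [hf, hg] at heq
        simp only [Sym2.map_pair_eq, Sym2.eq_iff] at heq
        rcases heq with ⟨h1, -⟩ | ⟨h1, -⟩ <;> exact absurd h1 (by simp)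
  rw [hdecomp, Set.ncard_union_eq hdisj (Set.toFinite _) (Set.toFinite _),
    Set.ncard_image_of_injective _ (Sym2.map.injective Sum.inl_injective),
    Set.ncard_image_of_injective _ hginj]
  congr 1
  have : (Set.univ ×ˢ (⊤ : SimpleGraph (Fin (x+2))).edgeSet) =
      (((Finset.univ : Finset (Fin ℓ)) ×ˢ (⊤ : SimpleGraph (Fin (x+2))).edgeFinset :
        Finset (Fin ℓ × Sym2 (Fin (x+2)))) : Set (Fin ℓ × Sym2 (Fin (x+2)))) := by
    rw [Finset.coe_product, Finset.coe_univ, SimpleGraph.coe_edgeFinset]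
  rw [this, Set.ncard_coe_finset, Finset.card_product, Finset.card_univ, Fintype.card_fin,
    SimpleGraph.card_edgeFinset_top_eq_card_choose_two, Fintype.card_fin]

private def inlEmb {V : Type*} {x ℓ : ℕ} : V ↪ V ⊕ (Fin ℓ × Fin (x+2)) :=
  ⟨Sum.inl, Sum.inl_injective⟩

private def inrEmb {V : Type*} {x ℓ : ℕ} (i : Fin ℓ) : Fin (x+2) ↪ V ⊕ (Fin ℓ × Fin (x+2)) :=
  ⟨fun u => Sum.inr (i, u), fun a b h => by simpa using h⟩

lemma addCliques_triCount {V : Type*} [Fintype V] (G : SimpleGraph V) (x ℓ : ℕ) :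
    triCount (addCliques G x ℓ) = triCount G + ℓ * (x+2).choose 3 := by
  classical
  set A := (fun s : Finset V => s.map (inlEmb (ℓ := ℓ) (x := x))) '' {s | G.IsNClique 3 s}
    with hA
  set B := (fun p : Fin ℓ × Finset (Fin (x+2)) => p.2.map (inrEmb (V := V) p.1)) ''
    (Set.univ ×ˢ {s : Finset (Fin (x+2)) | s.card = 3}) with hB
  have hdecomp : {t : Finset (V ⊕ (Fin ℓ × Fin (x+2))) | (addCliques G x ℓ).IsNClique 3 t}
      = A ∪ B := by
    ext t
    simp only [Set.mem_setOf_eq, Set.mem_union]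
    constructor
    · rintro ⟨hc, hcard⟩
      obtain ⟨a, ha⟩ := Finset.card_pos.mp (by omega : 0 < t.card)
      match a, ha with
      | Sum.inl u, ha =>
        have hall : t ⊆ Finset.univ.map (inlEmb (ℓ := ℓ) (x := x)) := by
          intro b hb
          simp only [Finset.mem_map, Finset.mem_univ, true_and, inlEmb,
            Function.Embedding.coeFn_mk]
          by_cases hba : b = Sum.inl u
          · exact ⟨u, hba.symm⟩
          · rcases addCliques_adj_iff.mp (hc ha hb (fun h => hba h.symm)) with ⟨u', v', -, h2, -⟩ |
              ⟨i, u', v', h1, -, -⟩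
            · exact ⟨v', h2.symm⟩
            · exact absurd h1 (by simp)
        obtain ⟨s, -, rfl⟩ := Finset.subset_map_iff.mp hall
        left
        refine ⟨s, ⟨fun p hp q hq hpq => ?_, by simpa using hcard⟩, rfl⟩
        have := hc (Finset.mem_map_of_mem _ hp) (Finset.mem_map_of_mem _ hq)
          (by simp [inlEmb, hpq])
        rcases addCliques_adj_iff.mp this with ⟨u', v', h1, h2, h3⟩ | ⟨i, u', v', h1, -, -⟩
        · simp only [inlEmb, Function.Embedding.coeFn_mk, Sum.inl.injEq] at h1 h2
          rwa [h1, h2]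
        · exact absurd h1 (by simp [inlEmb])
      | Sum.inr (i, u), ha =>
        have hall : t ⊆ Finset.univ.map (inrEmb (V := V) i) := by
          intro b hb
          simp only [Finset.mem_map, Finset.mem_univ, true_and, inrEmb,
            Function.Embedding.coeFn_mk]
          by_cases hba : b = Sum.inr (i, u)
          · exact ⟨u, hba.symm⟩
          · rcases addCliques_adj_iff.mp (hc ha hb (fun h => hba h.symm)) with ⟨u', v', h1, -, -⟩ |
              ⟨j, u', v', h1, h2, -⟩
            · exact absurd h1 (by simp)
            · simp only [Sum.inr.injEq, Prod.mk.injEq] at h1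
              exact ⟨v', by rw [h2, h1.1]; rfl⟩
        obtain ⟨s, -, rfl⟩ := Finset.subset_map_iff.mp hall
        right
        exact ⟨(i, s), by simpa using hcard, rfl⟩
    · rintro (⟨s, hs, rfl⟩ | ⟨⟨i, s⟩, hs, rfl⟩)
      · refine ⟨fun p hp q hq hpq => ?_, by simpa using hs.2⟩
        obtain ⟨u, hu, rfl⟩ := Finset.mem_map.mp hp
        obtain ⟨v, hv, rfl⟩ := Finset.mem_map.mp hq
        have huv : u ≠ v := fun h => hpq (by rw [h])
        exact addCliques_adj_iff.mpr (Or.inl ⟨u, v, rfl, rfl, hs.1 hu hv huv⟩)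
      · simp only [Set.mem_prod, Set.mem_univ, Set.mem_setOf_eq, true_and] at hs
        refine ⟨fun p hp q hq hpq => ?_, by simpa using hs⟩
        obtain ⟨u, hu, rfl⟩ := Finset.mem_map.mp hp
        obtain ⟨v, hv, rfl⟩ := Finset.mem_map.mp hq
        have huv : u ≠ v := fun h => hpq (by rw [h])
        exact addCliques_adj_iff.mpr (Or.inr ⟨i, u, v, rfl, rfl, huv⟩)
  have hdisj : Disjoint A B := by
    rw [Set.disjoint_left]
    rintro t ⟨s, hs, rfl⟩ ⟨⟨i, s'⟩, hs', heq⟩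
    have hcard : s.card = 3 := hs.2
    obtain ⟨u, hu⟩ := Finset.card_pos.mp (by omega : 0 < s.card)
    simp only at heq
    have h1 : (inlEmb (ℓ := ℓ) (x := x)) u ∈ s'.map (inrEmb (V := V) i) := by
      rw [heq]; exact Finset.mem_map_of_mem _ hu
    obtain ⟨w, -, hw⟩ := Finset.mem_map.mp h1
    simp [inlEmb, inrEmb] at hw
  have hBinj : Set.InjOn (fun p : Fin ℓ × Finset (Fin (x+2)) => p.2.map (inrEmb (V := V) p.1))
      (Set.univ ×ˢ {s : Finset (Fin (x+2)) | s.card = 3}) := by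
    rintro ⟨i, s⟩ hs ⟨j, s'⟩ hs' heq
    simp only [Set.mem_prod, Set.mem_univ, Set.mem_setOf_eq, true_and] at hs hs'
    obtain ⟨u, hu⟩ := Finset.card_pos.mp (by omega : 0 < s.card)
    simp only at heq
    have h1 : (inrEmb (V := V) i) u ∈ s'.map (inrEmb (V := V) j) := by
      rw [← heq]; exact Finset.mem_map_of_mem _ hu
    obtain ⟨w, -, hw⟩ := Finset.mem_map.mp h1
    simp only [inrEmb, Function.Embedding.coeFn_mk, Sum.inr.injEq, Prod.mk.injEq] at hw
    obtain ⟨rfl, -⟩ := hw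
    have h2 := Finset.map_injective _ heq
    rw [h2]
  have hprod : (Set.univ ×ˢ {s : Finset (Fin (x+2)) | s.card = 3}) =
      (((Finset.univ : Finset (Fin ℓ)) ×ˢ (Finset.univ.powersetCard 3) :
        Finset (Fin ℓ × Finset (Fin (x+2)))) : Set (Fin ℓ × Finset (Fin (x+2)))) := by
    ext ⟨i, s⟩
    simp [Finset.mem_powersetCard]
  unfold triCount
  rw [hdecomp, Set.ncard_union_eq hdisj (Set.toFinite _) (Set.toFinite _), hA, hB,
    Set.ncard_image_of_injective _ (Finset.map_injective _),
    Set.ncard_image_of_injOn hBinj, hprod, Set.ncard_coe_finset, Finset.card_product,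
    Finset.card_univ, Fintype.card_fin, Finset.card_powersetCard, Finset.card_univ,
    Fintype.card_fin]

/-- With `ℓ = ⌈m / C(x+2,2)⌉`, the triangle density of `G(x)` is at most
`max{t_G, x/3}`. -/
theorem addCliques_density_le_max {V : Type*} [Fintype V]
    (G : SimpleGraph V) (x ℓ : ℕ) (hm : 1 ≤ G.edgeSet.ncard)
    (hℓ : ℓ = ⌈(G.edgeSet.ncard : ℚ) / ((x + 2).choose 2 : ℚ)⌉₊) :
    (triCount (addCliques G x ℓ) : ℝ) / ((addCliques G x ℓ).edgeSet.ncard : ℝ) ≤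
      max (trussness G : ℝ) ((x : ℝ) / 3) := by
  classical
  have hT := triCount_le_trussness G
  rw [addCliques_triCount, addCliques_edge_ncard]
  set m := G.edgeSet.ncard with hmdef
  set T := triCount G with hTdef
  set t := trussness G with htdef
  set C2 := (x+2).choose 2 with hC2def
  set C3 := (x+2).choose 3 with hC3def
  have hC : C3 * 3 = C2 * x := by
    have h := Nat.choose_succ_right_eq (x+2) 2
    simpa [hC2def, hC3def] using h
  have hden : (0:ℝ) < ((m + ℓ * C2 : ℕ) : ℝ) := by
    have : 1 ≤ m + ℓ * C2 := le_trans hm (Nat.le_add_right _ _)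
    exact_mod_cast Nat.lt_of_lt_of_le Nat.zero_lt_one this
  rw [div_le_iff₀ hden]
  set M := max (t:ℝ) ((x:ℝ)/3) with hM
  have h1 : (t:ℝ) ≤ M := le_max_left _ _
  have h2 : (x:ℝ)/3 ≤ M := le_max_right _ _
  have hTr : (T:ℝ) ≤ (m:ℝ) * t := by exact_mod_cast hT
  have hCr : (C3:ℝ) * 3 = (C2:ℝ) * x := by exact_mod_cast hC
  have hC3r : (C3:ℝ) = (C2:ℝ) * x / 3 := by linarith
  push_cast
  rw [hC3r]
  have hm0 : (0:ℝ) ≤ (m:ℝ) := Nat.cast_nonneg _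
  have hl0 : (0:ℝ) ≤ (ℓ:ℝ) * (C2:ℝ) := by positivity
  nlinarith [mul_le_mul_of_nonneg_left h1 hm0, mul_le_mul_of_nonneg_left h2 hl0]
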